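/- Sensitivity under a local change, element outside the basis: Let M be a loopless matroid, x and x' weightings differing only at element e, and B an x-optimal basis with e ∉ B. Then B is x'-optimal if and only if x'(e) ≥ μ_e(x). -/

import Mathlib

open Matroid Set

variable {α : Type*}

/-- A circuit of a matroid: a minimal dependent set. -/
def Matroid.PaperIsCircuit (M : Matroid α) (C : Set α) : Prop :=
  M.Dep C ∧ ∀ ⦃D⦄, D ⊂ C → M.Indep D

/-- Looplessness in the sense of the paper: no element is a loop
(every singleton of the ground set is independent) and no element is a
coloop (no element lies in all bases). -/
def Matroid.PaperLoopless (M : Matroid α) : Prop :=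
  ∀ e ∈ M.E, M.Indep {e} ∧ ∃ B, M.IsBase B ∧ e ∉ B

/-- The weight `x(B)` of a set of ground elements. -/
noncomputable def setWeight (x : α → ℝ) (B : Set α) : ℝ := ∑ᶠ e ∈ B, x e

/-- The min-max weight `μ_e(x)`: the minimum over circuits `C` containing `e`
of the maximum weight of an element of `C - e`. -/
noncomputable def muWeight (M : Matroid α) (x : α → ℝ) (e : α) : ℝ :=
  sInf {w | ∃ C, M.PaperIsCircuit C ∧ e ∈ C ∧ w = sSup (x '' (C \ {e}))}

/-- The bottleneck weight `b_e(x) = min {x(e), μ_e(x)}`. -/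
noncomputable def bottleneck (M : Matroid α) (x : α → ℝ) (e : α) : ℝ :=
  min (x e) (muWeight M x e)

/-- The minimum weight of a basis of `M`. -/
noncomputable def mwb (M : Matroid α) (x : α → ℝ) : ℝ :=
  sInf {w | ∃ B, M.IsBase B ∧ w = setWeight x B}

/-- `B` is an `x`-optimal basis of `M`. -/
def IsOptimalBase (M : Matroid α) (x : α → ℝ) (B : Set α) : Prop :=
  M.IsBase B ∧ ∀ B', M.IsBase B' → setWeight x B ≤ setWeight x B'

/-- Deletion of a single element. -/
noncomputable def Matroid.del (M : Matroid α) (e : α) : Matroid α :=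
  M ↾ (M.E \ {e})

/-- Contraction of a single element, defined by duality: `M/e = (M✶ \ e)✶`. -/
noncomputable def Matroid.con (M : Matroid α) (e : α) : Matroid α :=
  ((M✶ ↾ (M.E \ {e}))✶)

/- ### Auxiliary lemmas -/

lemma setWeight_eq_sum (x : α → ℝ) {s : Set α} (hs : s.Finite) :
    setWeight x s = ∑ e ∈ hs.toFinset, x e := by
  rw [setWeight, ← finsum_mem_coe_finset]
  simp

lemma setWeight_diff_add (x : α → ℝ) {s : Set α} (hs : s.Finite) {f : α} (hf : f ∈ s) :
    setWeight x s = setWeight x (s \ {f}) + x f := by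
  classical
  rw [setWeight_eq_sum x hs, setWeight_eq_sum x (hs.diff)]
  rw [← Finset.sum_erase_add hs.toFinset x (hs.mem_toFinset.2 hf)]
  congr 1
  apply Finset.sum_congr _ (fun _ _ => rfl)
  ext a
  simp [Set.mem_diff, and_comm]

lemma setWeight_insert (x : α → ℝ) {s : Set α} (hs : s.Finite) {f : α} (hf : f ∉ s) :
    setWeight x (insert f s) = setWeight x s + x f := by
  have := setWeight_diff_add x (hs.insert f) (mem_insert f s)
  rwa [insert_diff_self_of_notMem hf] at this

lemma setWeight_congr {x x' : α → ℝ} {s : Set α} (h : ∀ f ∈ s, x' f = x f) :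
    setWeight x' s = setWeight x s :=
  finsum_mem_congr rfl h

lemma exists_isCircuit_subset (M : Matroid α) {D : Set α} (hDfin : D.Finite) (hD : M.Dep D) :
    ∃ C ⊆ D, M.PaperIsCircuit C := by
  obtain ⟨C, ⟨hCD, hC⟩, hmin⟩ := Set.Finite.exists_minimal (s := {C | C ⊆ D ∧ M.Dep C})
    (hDfin.finite_subsets.subset (fun t ht => ht.1)) ⟨D, subset_rfl, hD⟩
  refine ⟨C, hCD, hC, fun D' hD' => ?_⟩
  by_contra hind
  have hD'E : D' ⊆ M.E := hD'.subset.trans hC.subset_ground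
  have hdep : M.Dep D' := (M.not_indep_iff hD'E).mp hind
  have := (hmin (show D' ∈ {C | C ⊆ D ∧ M.Dep C} from ⟨hD'.subset.trans hCD, hdep⟩) hD'.subset).antisymm hD'.subset
  exact hD'.ne this.symm

lemma circuit_mem_closure {M : Matroid α} {C : Set α} (hC : M.PaperIsCircuit C) {f : α} (hf : f ∈ C) :
    f ∈ M.closure (C \ {f}) := by
  have hind : M.Indep (C \ {f}) := hC.2 (diff_singleton_ssubset.2 hf)
  rw [hind.mem_closure_iff]
  left
  rw [insert_diff_singleton, insert_eq_self.2 hf]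
  exact hC.1

lemma circuit_diff_nonempty {M : Matroid α} (hM : M.PaperLoopless) {C : Set α}
    (hC : M.PaperIsCircuit C) {e : α} (he : e ∈ C) : (C \ {e}).Nonempty := by
  rw [Set.nonempty_iff_ne_empty]
  intro h
  have hCe : C = {e} := Subset.antisymm (by rwa [diff_eq_empty] at h)
    (singleton_subset_iff.2 he)
  exact hC.1.not_indep (hCe ▸ (hM e (hC.1.subset_ground he)).1)

lemma muSet_finite (M : Matroid α) [M.Finite] (x : α → ℝ) (e : α) :
    {w | ∃ C, M.PaperIsCircuit C ∧ e ∈ C ∧ w = sSup (x '' (C \ {e}))}.Finite := by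
  apply Set.Finite.subset (M.ground_finite.finite_subsets.image
    (fun C => sSup (x '' (C \ {e}))))
  rintro w ⟨C, hC, -, rfl⟩
  exact ⟨C, hC.1.subset_ground, rfl⟩

/-- local sensitivity for an element outside the optimal basis. -/
theorem stmt16 (M : Matroid α) [M.Finite] (hM : M.PaperLoopless)
    (x x' : α → ℝ) {e : α} (he : e ∈ M.E)
    (hdiff : ∀ f, f ≠ e → x' f = x f)
    {B : Set α} (hB : IsOptimalBase M x B) (heB : e ∉ B) :
    IsOptimalBase M x' B ↔ x' e ≥ muWeight M x e := by
  classical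
  set S := {w | ∃ C, M.PaperIsCircuit C ∧ e ∈ C ∧ w = sSup (x '' (C \ {e}))} with hS
  have hSfin : S.Finite := muSet_finite M x e
  have hBfin : B.Finite := M.set_finite B hB.1.subset_ground
  have hwB : setWeight x' B = setWeight x B :=
    setWeight_congr (fun f hf => hdiff f (fun h => heB (h ▸ hf)))
  -- the fundamental circuit of e with respect to B
  obtain ⟨C₀, hC₀B, hC₀⟩ := exists_isCircuit_subset M (hBfin.insert e)
    (hB.1.insert_dep ⟨he, heB⟩)
  have heC₀ : e ∈ C₀ := by
    by_contra h
    exact hC₀.1.not_indep (hB.1.indep.subset (fun a ha =>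
      ((hC₀B ha).resolve_left (fun h' => h (h' ▸ ha)))))
  have hSne : S.Nonempty := ⟨_, C₀, hC₀, heC₀, rfl⟩
  constructor
  · -- B x'-optimal → x' e ≥ μ
    rintro ⟨-, hopt⟩
    -- pick the max-weight element f of C₀ \ {e}
    have hC₀fin : C₀.Finite := M.set_finite C₀ hC₀.1.subset_ground
    have hne : (C₀ \ {e}).Nonempty := circuit_diff_nonempty hM hC₀ heC₀
    have hTne : (x '' (C₀ \ {e})).Nonempty := hne.image x
    have hTfin : (x '' (C₀ \ {e})).Finite := (hC₀fin.diff).image x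
    obtain ⟨f, hf, hfx⟩ := hTne.csSup_mem hTfin
    have hfB : f ∈ B := by
      have := hC₀B (diff_subset hf)
      exact this.resolve_left (fun h => hf.2 h)
    have hfe : f ≠ e := hf.2
    -- B' := insert e (B \ {f}) is a base
    have hfC : f ∈ M.closure (C₀ \ {f}) := circuit_mem_closure hC₀ hf.1
    have hecl : e ∉ M.closure (B \ {f}) := by
      intro hecl
      have hsub : C₀ \ {f} ⊆ insert e (B \ {f}) := by
        intro a ha
        rcases hC₀B ha.1 with h | h
        · exact h ▸ mem_insert _ _
        · exact mem_insert_of_mem _ ⟨h, ha.2⟩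
      have h1 : M.closure (C₀ \ {f}) ⊆ M.closure (insert e (B \ {f})) :=
        M.closure_subset_closure hsub
      have h2 : M.closure (insert e (B \ {f})) ⊆ M.closure (B \ {f}) := by
        rw [← closure_insert_closure_eq_closure_insert]
        rw [insert_eq_self.2 hecl, Matroid.closure_closure]
      exact hB.1.indep.notMem_closure_diff_of_mem hfB (h2 (h1 hfC))
    have hind : M.Indep (insert e (B \ {f})) := by
      have := ((hB.1.indep.diff {f}).notMem_closure_iff he).mp hecl
      exact this.1
    have hB' : M.IsBase (insert e (B \ {f})) := hB.1.exchange_isBase_of_indep heB hind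
    -- compare weights
    have hle := hopt _ hB'
    have hw1 : setWeight x' (insert e (B \ {f})) = setWeight x (B \ {f}) + x' e := by
      rw [setWeight_insert x' (hBfin.diff) (fun h => heB h.1)]
      congr 1
      exact setWeight_congr (fun a ha => hdiff a (fun h => heB (h ▸ ha.1)))
    have hw2 : setWeight x B = setWeight x (B \ {f}) + x f :=
      setWeight_diff_add x hBfin hfB
    have hxf : x f ≤ x' e := by
      rw [hwB, hw2] at hle
      rw [hw1] at hle
      linarith
    calc muWeight M x e ≤ sSup (x '' (C₀ \ {e})) :=
          csInf_le hSfin.bddBelow ⟨C₀, hC₀, heC₀, rfl⟩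
      _ = x f := hfx.symm
      _ ≤ x' e := hxf
  · -- x' e ≥ μ → B x'-optimal
    intro hge
    refine ⟨hB.1, fun B' hB' => ?_⟩
    have hB'fin : B'.Finite := M.set_finite B' hB'.subset_ground
    rw [hwB]
    by_cases heB' : e ∈ B'
    · -- minimizing circuit C with μ = sSup (x '' (C \ {e}))
      obtain ⟨C, hC, heC, hmu⟩ : muWeight M x e ∈ S := hSne.csInf_mem hSfin
      have hCfin : C.Finite := M.set_finite C hC.1.subset_ground
      -- find f ∈ C \ {e} outside closure of B' \ {e}
      have hex : ∃ f ∈ C \ {e}, f ∉ M.closure (B' \ {e}) := by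
        by_contra h
        push_neg at h
        have hsub : C \ {e} ⊆ M.closure (B' \ {e}) := fun a ha => h a ha
        have : e ∈ M.closure (B' \ {e}) := by
          have h1 : e ∈ M.closure (C \ {e}) := circuit_mem_closure hC heC
          have h2 : M.closure (C \ {e}) ⊆ M.closure (M.closure (B' \ {e})) :=
            M.closure_subset_closure hsub
          rw [Matroid.closure_closure] at h2
          exact h2 h1
        exact hB'.indep.notMem_closure_diff_of_mem heB' this
      obtain ⟨f, hfC, hfcl⟩ := hex
      have hfE : f ∈ M.E := hC.1.subset_ground hfC.1
      have hfB' : f ∉ B' := by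
        intro h
        exact hfcl (M.subset_closure (B' \ {e})
          ((diff_subset.trans hB'.subset_ground)) ⟨h, hfC.2⟩)
      have hind : M.Indep (insert f (B' \ {e})) :=
        (((hB'.indep.diff {e}).notMem_closure_iff hfE).mp hfcl).1
      have hB'' : M.IsBase (insert f (B' \ {e})) := hB'.exchange_isBase_of_indep hfB' hind
      have hle := hB.2 _ hB''
      have hw1 : setWeight x (insert f (B' \ {e})) = setWeight x (B' \ {e}) + x f := by
        rw [setWeight_insert x (hB'fin.diff) (fun h => hfB' h.1)]
      have hw2 : setWeight x' B' = setWeight x (B' \ {e}) + x' e := by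
        rw [setWeight_diff_add x' hB'fin heB']
        congr 1
        exact setWeight_congr (fun a ha => hdiff a ha.2)
      have hxf : x f ≤ x' e := by
        calc x f ≤ sSup (x '' (C \ {e})) :=
              le_csSup (((hCfin.diff).image x).bddAbove) ⟨f, hfC, rfl⟩
          _ = muWeight M x e := hmu.symm
          _ ≤ x' e := hge
      rw [hw2]
      rw [hw1] at hle
      linarith
    · rw [setWeight_congr (fun f hf => hdiff f (fun h => heB' (h ▸ hf)))]
      exact hB.2 _ hB'
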